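/- Let Ξ be a finite set, Π : Ξ × Ξ → {0,1}, λ > 0, and h = (h_j)_{j∈Ξ} a vector with h_j > 0; set p_{ij} = Π_{ij} h_j / (λ h_i). Let ι : Ξ → Ξ be an involution and Ξ_S, Ξ_F ⊆ Ξ subsets with ι(Ξ_S) = Ξ_F. Let G be a group acting on a probability space (X,μ) by invertible measure-preserving transformations with Koopman operators T_g, and let γ, ω : Ξ → G. Define, on tuples φ = (φ_j)_{j∈Ξ} of functions on X, the operators (Pφ)_i = Σ_j p_{ij} T_{γ(i)}^{−1} φ_j and (Uφ)_j = T_{ω(j)}^{−1} φ_{ι(j)}; and for f ∈ L¹(X,μ) let φ^{(f)} be the tuple with φ^{(f)}_j = (1/h_{ι(j)}) f if j ∈ Ξ_S and φ^{(f)}_j = 0 otherwise. Then for every n ≥ 1 and every f ∈ L¹(X,μ): Σ T_{ω(i_{n−1}) γ(i_{n−2}) ⋯ γ(i₁) γ(i₀)}^{−1} f = λ^{n−1} Σ_{j∈Ξ_S} h_j (P^{n−1} U φ^{(f)})_j, where the left-hand sum ranges over all sequences (i₀, …, i_{n−1}) ∈ Ξ^n with i₀ ∈ Ξ_S, i_{n−1}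 ∈ Ξ_F and Π_{i_s i_{s+1}} = 1 for all 0 ≤ s ≤ n−2. -/

import Mathlib

open MeasureTheory Filter

noncomputable section

/-- The Markov operator `(Pφ)_i = Σ_j p_{ij} T_{γ(i)}⁻¹ φ_j` on tuples `(φ_j)_{j∈Ξ}` of
`L¹(X,μ)`-functions. -/
def PopL1 {Ξ : Type*} [Fintype Ξ] {X : Type*} [MeasurableSpace X] {G : Type*} [Group G]
    (μ : Measure X) (p' : Ξ → Ξ → ℝ) (T : G → Lp ℝ 1 μ →L[ℝ] Lp ℝ 1 μ) (γ : Ξ → G)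
    (φ : Ξ → Lp ℝ 1 μ) : Ξ → Lp ℝ 1 μ :=
  fun i => ∑ j, p' i j • T (γ i)⁻¹ (φ j)

/-- The operator `(Uφ)_j = T_{ω(j)}⁻¹ φ_{ι(j)}` on tuples of `L¹(X,μ)`-functions. -/
def UopL1 {Ξ : Type*} {X : Type*} [MeasurableSpace X] {G : Type*} [Group G]
    (μ : Measure X) (T : G → Lp ℝ 1 μ →L[ℝ] Lp ℝ 1 μ) (ι : Ξ → Ξ) (ω : Ξ → G)
    (φ : Ξ → Lp ℝ 1 μ) : Ξ → Lp ℝ 1 μ :=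
  fun j => T (ω j)⁻¹ (φ (ι j))

open scoped Classical in
/-- The spherical sum `Σ T_{ω(i_{n−1})γ(i_{n−2})⋯γ(i₀)}⁻¹ f`, taken over all
admissible sequences `(i₀,…,i_{n−1})` of states starting in `Ξ_S` and ending in `Ξ_F`, equals
`λ^{n−1} Σ_{j∈Ξ_S} h_j (P^{n−1} U φ^{(f)})_j`.  (Here `n = m + 1 ≥ 1`.) -/
theorem statement12
    {Ξ : Type*} [Fintype Ξ] [DecidableEq Ξ] {X : Type*} [MeasurableSpace X] {G : Type*} [Group G]
    (μ : Measure X) [IsProbabilityMeasure μ]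
    -- the 0–1 transition matrix, the PF eigenvalue and eigenvector
    (M : Ξ → Ξ → ℝ) (hM : ∀ i j, M i j = 0 ∨ M i j = 1)
    (lam : ℝ) (hlam : 0 < lam)
    (h : Ξ → ℝ) (hh : ∀ j, 0 < h j)
    -- the involution and the sets of start and final states
    (ι : Ξ → Ξ) (hι : ∀ j, ι (ι j) = j)
    (ΞS ΞF : Finset Ξ) (hSF : ΞS.image ι = ΞF)
    -- the measure-preserving action of G on (X,μ) by invertible transformations
    (S : G → X → X) (hS : ∀ g, MeasurePreserving (S g) μ μ)
    (hS1 : S 1 = id) (hSm : ∀ g g', S (g * g') = S g ∘ S g')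
    -- the Koopman operators T_g f = f ∘ S g⁻¹ on L¹(X,μ)
    (T : G → Lp ℝ 1 μ →L[ℝ] Lp ℝ 1 μ)
    (hT : ∀ g (f : Lp ℝ 1 μ), (T g f : X → ℝ) =ᵐ[μ] fun x => f (S g⁻¹ x))
    (γ ω : Ξ → G)
    (m : ℕ) (f : Lp ℝ 1 μ) :
    (∑ i : Fin (m + 1) → Ξ,
      if i 0 ∈ ΞS ∧ i (Fin.last m) ∈ ΞF ∧
          (∀ s : Fin m, M (i s.castSucc) (i s.succ) = 1) then
        T (ω (i (Fin.last m)) *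
            ((List.ofFn fun s : Fin m => γ (i s.castSucc)).reverse).prod)⁻¹ f
      else 0)
    = lam ^ m •
      ∑ j ∈ ΞS, h j •
        (PopL1 μ (fun i' j' => M i' j' * h j' / (lam * h i')) T γ)^[m]
          (UopL1 μ T ι ω fun j' => if j' ∈ ΞS then (h (ι j'))⁻¹ • f else 0) j := by
  -- basic facts about the Koopman operators
  have hT1 : ∀ (x : Lp ℝ 1 μ), T 1 x = x := by
    intro x
    apply Lp.ext
    refine (hT 1 x).trans ?_
    simp [hS1]
  have hTmul : ∀ g g' (x : Lp ℝ 1 μ), T g (T g' x) = T (g * g') x := by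
    intro g g' x
    apply Lp.ext
    refine (hT g (T g' x)).trans (.trans ?_ (hT (g * g') x).symm)
    have h1 : (fun z => (x : X → ℝ) (S g'⁻¹ z)) ∘ S g⁻¹ =ᵐ[μ]
        fun y => x (S (g * g')⁻¹ y) := by
      rw [mul_inv_rev, hSm]; rfl
    exact .trans ((hS g⁻¹).quasiMeasurePreserving.ae_eq_comp (hT g' x)) h1
  set p' : Ξ → Ξ → ℝ := fun i' j' => M i' j' * h j' / (lam * h i') with hp'
  have hne : ∀ j, h j ≠ 0 := fun j => (hh j).ne'
  -- membership in ΞF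
  have hmem : ∀ j, j ∈ ΞF ↔ ι j ∈ ΞS := by
    intro j
    rw [← hSF, Finset.mem_image]
    constructor
    · rintro ⟨a, ha, rfl⟩; rwa [hι]
    · intro hj; exact ⟨ι j, hj, hι j⟩
  -- the telescoping product identity
  have hw : ∀ (i : Fin (m + 1) → Ξ),
      (∏ s : Fin m, p' (i s.castSucc) (i s.succ))
        = (∏ s : Fin m, M (i s.castSucc) (i s.succ)) * h (i (Fin.last m))
            / (lam ^ m * h (i 0)) := by
    intro i
    have e1 : (∏ s : Fin m, p' (i s.castSucc) (i s.succ))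
        = ((∏ s : Fin m, M (i s.castSucc) (i s.succ)) * ∏ s : Fin m, h (i s.succ))
            / (lam ^ m * ∏ s : Fin m, h (i s.castSucc)) := by
      rw [hp']
      rw [Finset.prod_div_distrib, Finset.prod_mul_distrib, Finset.prod_mul_distrib,
        Finset.prod_const]
      simp
    have e2 : (∏ s : Fin m, h (i s.succ)) * h (i 0) = ∏ t : Fin (m + 1), h (i t) := by
      rw [Fin.prod_univ_succ]; ring
    have e3 : (∏ s : Fin m, h (i s.castSucc)) * h (i (Fin.last m))
        = ∏ t : Fin (m + 1), h (i t) := by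
      rw [Fin.prod_univ_castSucc]
    have hlne : lam ^ m ≠ 0 := pow_ne_zero _ hlam.ne'
    have d1 : lam ^ m * (∏ s : Fin m, h (i s.castSucc)) ≠ 0 :=
      mul_ne_zero hlne (Finset.prod_ne_zero_iff.2 fun t _ => hne _)
    have d2 : lam ^ m * h (i 0) ≠ 0 := mul_ne_zero hlne (hne _)
    rw [e1, div_eq_div_iff d1 d2]
    linear_combination ((∏ s : Fin m, M (i s.castSucc) (i s.succ)) * lam ^ m) * (e2 - e3)
  -- the product of the 0–1 entries along a path
  have hM01 : ∀ (i : Fin (m + 1) → Ξ),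
      (∏ s : Fin m, M (i s.castSucc) (i s.succ))
        = if (∀ s : Fin m, M (i s.castSucc) (i s.succ) = 1) then (1 : ℝ) else 0 := by
    intro i
    by_cases hall : ∀ s : Fin m, M (i s.castSucc) (i s.succ) = 1
    · rw [if_pos hall, Finset.prod_eq_one fun s _ => hall s]
    · rw [if_neg hall]
      push_neg at hall
      obtain ⟨s, hs⟩ := hall
      exact Finset.prod_eq_zero (Finset.mem_univ s)
        ((hM (i s.castSucc) (i s.succ)).resolve_right hs)
  -- the path expansion of the iterated Markov operator
  have key2 : ∀ (n : ℕ) (ψ : Ξ → Lp ℝ 1 μ) (j₀ : Ξ),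
      (PopL1 μ p' T γ)^[n] ψ j₀
        = ∑ i : Fin (n + 1) → Ξ,
            if i 0 = j₀ then
              (∏ s : Fin n, p' (i s.castSucc) (i s.succ)) •
                T (((List.ofFn fun s : Fin n => γ (i s.castSucc)).reverse).prod)⁻¹
                  (ψ (i (Fin.last n)))
            else 0 := by
    intro n
    induction n with
    | zero =>
      intro ψ j₀
      rw [Function.iterate_zero_apply]
      have h0 : ∀ i : Fin 1 → Ξ,
          (if i 0 = j₀ then
              (∏ s : Fin 0, p' (i s.castSucc) (i s.succ)) •
                T (((List.ofFn fun s : Fin 0 => γ (i s.castSucc)).reverse).prod)⁻¹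
                  (ψ (i (Fin.last 0)))
            else 0) = if i 0 = j₀ then ψ (i 0) else 0 := by
        intro i
        simp [hT1, show Fin.last 0 = 0 from rfl]
      rw [Finset.sum_congr rfl fun i _ => h0 i]
      rw [← (Equiv.funUnique (Fin 1) Ξ).symm.sum_comp
        (fun i : Fin 1 → Ξ => if i 0 = j₀ then ψ (i 0) else 0)]
      simp [Equiv.funUnique, Finset.sum_ite_eq']
    | succ n ih =>
      intro ψ j₀
      rw [Function.iterate_succ_apply']
      show ∑ k, p' j₀ k • T (γ j₀)⁻¹ (((PopL1 μ p' T γ)^[n] ψ) k) = _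
      rw [← (Fin.consEquiv (fun _ : Fin (n + 2) => Ξ)).sum_comp, Fintype.sum_prod_type]
      simp only [Fin.consEquiv_apply]
      calc ∑ k, p' j₀ k • T (γ j₀)⁻¹ (((PopL1 μ p' T γ)^[n] ψ) k)
          = ∑ i : Fin (n + 1) → Ξ,
              (p' j₀ (i 0) * ∏ s : Fin n, p' (i s.castSucc) (i s.succ)) •
                T (((List.ofFn fun s : Fin n => γ (i s.castSucc)).reverse).prod * γ j₀)⁻¹
                  (ψ (i (Fin.last n))) := by
            simp only [ih, map_sum, Finset.smul_sum]
            rw [Finset.sum_comm]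
            refine Finset.sum_congr rfl fun i _ => ?_
            simp only [apply_ite (T (γ j₀)⁻¹), map_zero, smul_ite, smul_zero]
            rw [Finset.sum_ite_eq]
            simp [hTmul, smul_smul, mul_inv_rev]
        _ = _ := by
            simp only [Fin.cons_zero]
            rw [Finset.sum_comm]
            refine Finset.sum_congr rfl fun i _ => ?_
            rw [Finset.sum_ite_eq']
            simp only [Finset.mem_univ, if_true]
            have hlast : (Fin.cons j₀ i : Fin (n + 2) → Ξ) (Fin.last (n + 1)) = i (Fin.last n) := by
              rw [← Fin.succ_last, Fin.cons_succ]
            have hprod : (∏ s : Fin (n + 1),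
                p' ((Fin.cons j₀ i : Fin (n + 2) → Ξ) s.castSucc)
                  ((Fin.cons j₀ i : Fin (n + 2) → Ξ) s.succ))
                = p' j₀ (i 0) * ∏ s : Fin n, p' (i s.castSucc) (i s.succ) := by
              rw [Fin.prod_univ_succ]
              simp [← Fin.succ_castSucc]
            have hlist : (List.ofFn fun s : Fin (n + 1) =>
                γ ((Fin.cons j₀ i : Fin (n + 2) → Ξ) s.castSucc))
                = γ j₀ :: List.ofFn fun s : Fin n => γ (i s.castSucc) := by
              rw [List.ofFn_succ]
              simp [← Fin.succ_castSucc]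
            rw [hlast, hprod, hlist]
            simp
  -- main computation
  have hrw : (∑ j ∈ ΞS, h j •
      (PopL1 μ p' T γ)^[m]
        (UopL1 μ T ι ω fun j' => if j' ∈ ΞS then (h (ι j'))⁻¹ • f else 0) j)
      = ∑ j ∈ ΞS, h j • ∑ i : Fin (m + 1) → Ξ,
          if i 0 = j then
            (∏ s : Fin m, p' (i s.castSucc) (i s.succ)) •
              T (((List.ofFn fun s : Fin m => γ (i s.castSucc)).reverse).prod)⁻¹
                ((UopL1 μ T ι ω fun j' => if j' ∈ ΞS then (h (ι j'))⁻¹ • f else 0)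
                  (i (Fin.last m)))
          else 0 :=
    Finset.sum_congr rfl fun j _ => by rw [key2 m]
  rw [hrw]
  simp only [Finset.smul_sum, smul_ite, smul_zero, smul_smul]
  rw [Finset.sum_comm]
  refine Finset.sum_congr rfl fun i _ => ?_
  rw [Finset.sum_ite_eq]
  by_cases h0 : i 0 ∈ ΞS
  · rw [if_pos h0]
    by_cases hF : i (Fin.last m) ∈ ΞF
    · have hiS : ι (i (Fin.last m)) ∈ ΞS := (hmem _).1 hF
      have hψ : (UopL1 μ T ι ω fun j' => if j' ∈ ΞS then (h (ι j'))⁻¹ • f else 0)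
          (i (Fin.last m))
          = (h (i (Fin.last m)))⁻¹ • T (ω (i (Fin.last m)))⁻¹ f := by
        simp only [UopL1]
        rw [if_pos hiS, hι, _root_.map_smul]
      rw [hψ, _root_.map_smul, hTmul, ← mul_inv_rev, smul_smul]
      have hsc : lam ^ m * (h (i 0) * ∏ s : Fin m, p' (i s.castSucc) (i s.succ))
          * (h (i (Fin.last m)))⁻¹
          = if (∀ s : Fin m, M (i s.castSucc) (i s.succ) = 1) then (1 : ℝ) else 0 := by
        rw [hw i, ← hM01 i]
        have gen : ∀ (a b c P : ℝ), a ≠ 0 → b ≠ 0 → c ≠ 0 →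
            a * (b * (P * c / (a * b))) * c⁻¹ = P := by
          intro a b c P ha hb hc
          field_simp
        exact gen _ _ _ _ (pow_ne_zero _ hlam.ne') (hne _) (hne _)
      rw [hsc]
      by_cases hall : ∀ s : Fin m, M (i s.castSucc) (i s.succ) = 1
      · rw [if_pos ⟨h0, hF, hall⟩, if_pos hall, one_smul]
      · rw [if_neg (fun hc => hall hc.2.2), if_neg hall, zero_smul]
    · have hiS : ι (i (Fin.last m)) ∉ ΞS := fun hc => hF ((hmem _).2 hc)
      have hψ : (UopL1 μ T ι ω fun j' => if j' ∈ ΞS then (h (ι j'))⁻¹ • f else 0)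
          (i (Fin.last m)) = 0 := by
        simp only [UopL1]
        rw [if_neg hiS, map_zero]
      rw [hψ, map_zero, smul_zero, if_neg (fun hc => hF hc.2.1)]
  · rw [if_neg h0, if_neg (fun hc => h0 hc.1)]
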